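/- For every r ∈ ℕ with r ≥ 1, every n ∈ ℕ, and every x ∈ ℚ, the falling factorial satisfies (x)_n = Σ_{l=0}^{n} C(n,l) · C_l^{(r)}(x) · D_{n−l}^{(r)}, where C_l^{(r)}(x) are the Cauchy polynomials of the first kind of order r and D_{n−l}^{(r)} = D_{n−l}^{(r)}(0) are the Daehee numbers of order r. -/

import Mathlib

/-- `log(1+t) = ∑_{n ≥ 1} (-1)^{n+1} t^n / n` as a formal power series over `ℚ`. -/
noncomputable def logOneAdd : PowerSeries ℚ :=
  PowerSeries.mk fun n => if n = 0 then 0 else (-1 : ℚ) ^ (n + 1) / n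

/-- `e^{xt} = ∑_{n ≥ 0} x^n t^n / n!` as a formal power series over `ℚ`. -/
noncomputable def expMul (x : ℚ) : PowerSeries ℚ :=
  PowerSeries.mk fun n => x ^ n / (n.factorial : ℚ)

/-- Formal composition `f(g(t))` of power series, intended for `g` with zero
constant term (then `coeff n (g^m) = 0` for `m > n`, so the sum below is the
full composition). -/
noncomputable def psComp (f g : PowerSeries ℚ) : PowerSeries ℚ :=
  PowerSeries.mk fun n =>
    ∑ m ∈ Finset.range (n + 1),
      PowerSeries.coeff m f * PowerSeries.coeff n (g ^ m)

/-- `(1+t)^x := exp (x · log(1+t))` as a formal power series over `ℚ`. -/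
noncomputable def onePlusPow (x : ℚ) : PowerSeries ℚ :=
  psComp (PowerSeries.exp ℚ) (x • logOneAdd)

/-- The falling factorial `(x)_n = x (x-1) ⋯ (x-n+1)`. -/
def fallFact (x : ℚ) (n : ℕ) : ℚ := ∏ i ∈ Finset.range n, (x - (i : ℚ))

open PowerSeries

lemma constCoeff_logOneAdd : constantCoeff logOneAdd = 0 := by
  rw [← coeff_zero_eq_constantCoeff_apply]
  simp [logOneAdd]

lemma coeff_logOneAdd_pow_eq_zero {n m : ℕ} (h : n < m) :
    coeff n (logOneAdd ^ m) = 0 := by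
  have : (X : PowerSeries ℚ) ^ m ∣ logOneAdd ^ m :=
    pow_dvd_pow_of_dvd (X_dvd_iff.2 constCoeff_logOneAdd) m
  exact (X_pow_dvd_iff.1 this) n h

lemma coeff_derivativeFun' (f : PowerSeries ℚ) (n : ℕ) :
    coeff n (derivativeFun f) = coeff (n + 1) f * (n + 1) :=
  coeff_derivative f n

lemma one_add_X_mul_dLog :
    ((1 : PowerSeries ℚ) + X) * derivativeFun logOneAdd = 1 := by
  ext n
  rw [add_mul, one_mul, map_add, coeff_derivativeFun', coeff_one]
  rcases n with _ | k
  · simp [logOneAdd, coeff_zero_X_mul]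
  · rw [coeff_succ_X_mul, coeff_derivativeFun']
    simp only [logOneAdd, coeff_mk, if_neg (Nat.succ_ne_zero _)]
    push_cast
    have h1 : ((k : ℚ) + 1 + 1) ≠ 0 := by positivity
    have h2 : ((k : ℚ) + 1) ≠ 0 := by positivity
    field_simp
    ring

lemma c_rec (n m : ℕ) :
    ((n : ℚ) + 1) * coeff (n + 1) (logOneAdd ^ (m + 1))
      + (n : ℚ) * coeff n (logOneAdd ^ (m + 1))
    = ((m : ℚ) + 1) * coeff n (logOneAdd ^ m) := by
  have hder : derivativeFun (logOneAdd ^ (m + 1))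
      = (m + 1) • (logOneAdd ^ m * derivativeFun logOneAdd) := by
    induction m with
    | zero => simp
    | succ k ih =>
      rw [pow_succ, derivativeFun_mul, ih]
      simp only [smul_eq_mul]
      rw [mul_smul_comm, ← mul_assoc, mul_comm logOneAdd (logOneAdd ^ k), ← pow_succ,
        succ_nsmul (logOneAdd ^ (k + 1) * derivativeFun logOneAdd) (k + 1), add_comm]
  have key : ((m : ℕ) + 1) • (logOneAdd ^ m)
      = (1 + X) * derivativeFun (logOneAdd ^ (m + 1)) := by
    rw [hder, mul_smul_comm, mul_left_comm, one_add_X_mul_dLog, mul_one]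
  have h2 := congrArg (coeff n) key
  rw [map_nsmul, nsmul_eq_mul, add_mul, one_mul, map_add, coeff_derivativeFun'] at h2
  push_cast at h2
  rw [h2]
  rcases n with _ | k
  · simp [coeff_zero_X_mul]
  · rw [coeff_succ_X_mul, coeff_derivativeFun']
    push_cast
    ring

lemma coeff_onePlusPow (x : ℚ) (n : ℕ) :
    coeff n (onePlusPow x)
      = ∑ m ∈ Finset.range (n + 1),
          x ^ m / (m.factorial : ℚ) * coeff n (logOneAdd ^ m) := by
  rw [onePlusPow, psComp, coeff_mk]
  refine Finset.sum_congr rfl fun m _ => ?_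
  rw [smul_pow, map_smul, smul_eq_mul, coeff_exp]
  simp only [Algebra.algebraMap_self_apply]
  ring

lemma sum_rec (x : ℚ) (n : ℕ) :
    ((n : ℚ) + 1) * (∑ m ∈ Finset.range (n + 2),
        x ^ m / (m.factorial : ℚ) * coeff (n + 1) (logOneAdd ^ m))
      + (n : ℚ) * (∑ m ∈ Finset.range (n + 1),
        x ^ m / (m.factorial : ℚ) * coeff n (logOneAdd ^ m))
    = x * ∑ m ∈ Finset.range (n + 1),
        x ^ m / (m.factorial : ℚ) * coeff n (logOneAdd ^ m) := by
  have hext : (∑ m ∈ Finset.range (n + 1),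
        x ^ m / (m.factorial : ℚ) * coeff n (logOneAdd ^ m))
      = ∑ m ∈ Finset.range (n + 2),
        x ^ m / (m.factorial : ℚ) * coeff n (logOneAdd ^ m) := by
    rw [Finset.sum_range_succ (fun m => x ^ m / (m.factorial : ℚ) * coeff n (logOneAdd ^ m))
      (n + 1), coeff_logOneAdd_pow_eq_zero (Nat.lt_succ_self n), mul_zero, add_zero]
  rw [hext, Finset.mul_sum, Finset.mul_sum, ← Finset.sum_add_distrib]
  have hsummand : ∀ m, ((n : ℚ) + 1) * (x ^ m / (m.factorial : ℚ) * coeff (n + 1) (logOneAdd ^ m))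
      + (n : ℚ) * (x ^ m / (m.factorial : ℚ) * coeff n (logOneAdd ^ m))
      = x ^ m / (m.factorial : ℚ) * (((n : ℚ) + 1) * coeff (n + 1) (logOneAdd ^ m)
          + (n : ℚ) * coeff n (logOneAdd ^ m)) := fun m => by ring
  rw [Finset.sum_congr rfl fun m _ => hsummand m]
  rw [Finset.sum_range_succ']
  have h0 : x ^ 0 / ((Nat.factorial 0 : ℕ) : ℚ) * (((n : ℚ) + 1) * coeff (n + 1) (logOneAdd ^ 0)
      + (n : ℚ) * coeff n (logOneAdd ^ 0)) = 0 := by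
    rcases n with _ | k
    · simp
    · simp [coeff_one]
  rw [h0, add_zero, ← hext, Finset.mul_sum]
  refine Finset.sum_congr rfl fun m _ => ?_
  rw [c_rec n m]
  have hf : ((m.factorial : ℚ)) ≠ 0 := by
    exact_mod_cast m.factorial_ne_zero
  have hm : ((m : ℚ) + 1) ≠ 0 := by positivity
  rw [Nat.factorial_succ]
  push_cast
  field_simp
  ring

lemma coeff_onePlusPow_eq_fallFact (x : ℚ) (n : ℕ) :
    coeff n (onePlusPow x) = fallFact x n / (n.factorial : ℚ) := by
  induction n with
  | zero =>
    rw [coeff_onePlusPow]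
    simp [fallFact]
  | succ k ih =>
    have h := sum_rec x k
    rw [← coeff_onePlusPow, ← coeff_onePlusPow, ih] at h
    have hk1 : ((k : ℚ) + 1) ≠ 0 := by positivity
    have hkf : ((k.factorial : ℕ) : ℚ) ≠ 0 := by exact_mod_cast k.factorial_ne_zero
    have hfall : fallFact x (k + 1) = fallFact x k * (x - k) := by
      rw [fallFact, fallFact, Finset.prod_range_succ]
    have : ((k : ℚ) + 1) * coeff (k + 1) (onePlusPow x)
        = (x - k) * (fallFact x k / (k.factorial : ℚ)) := by linarith
    rw [Nat.factorial_succ, hfall]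
    push_cast
    field_simp at this ⊢
    linarith
  
lemma onePlusPow_zero : onePlusPow (0 : ℚ) = 1 := by
  ext n
  rw [coeff_onePlusPow_eq_fallFact, coeff_one]
  rcases n with _ | k
  · simp [fallFact]
  · have : fallFact 0 (k + 1) = 0 := by
      rw [fallFact]
      exact Finset.prod_eq_zero (Finset.mem_range.2 (Nat.succ_pos k)) (by simp)
    simp [this]

theorem fallFact_eq_sum_cauchy_mul_daehee_number
    (r : ℕ) (hr : 1 ≤ r) (n : ℕ) (x : ℚ) (C D : ℕ → ℚ)
    (hC : (PowerSeries.X : PowerSeries ℚ) ^ r * onePlusPow x =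
      logOneAdd ^ r * (PowerSeries.mk fun k => C k / (k.factorial : ℚ)))
    (hD : logOneAdd ^ r * onePlusPow (0 : ℚ) =
      PowerSeries.X ^ r * (PowerSeries.mk fun k => D k / (k.factorial : ℚ))) :
    fallFact x n = ∑ l ∈ Finset.range (n + 1), (n.choose l : ℚ) * C l * D (n - l) := by
  rw [onePlusPow_zero, mul_one] at hD
  rw [hD, mul_assoc] at hC
  have hXr : (X : PowerSeries ℚ) ^ r ≠ 0 := pow_ne_zero r X_ne_zero
  have hmain : onePlusPow x
      = (PowerSeries.mk fun k => D k / (k.factorial : ℚ))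
        * (PowerSeries.mk fun k => C k / (k.factorial : ℚ)) :=
    mul_left_cancel₀ hXr hC
  have hco := congrArg (coeff n) hmain
  rw [coeff_onePlusPow_eq_fallFact, coeff_mul,
    Finset.Nat.sum_antidiagonal_eq_sum_range_succ_mk] at hco
  simp only [coeff_mk] at hco
  have hnf : ((n.factorial : ℕ) : ℚ) ≠ 0 := by exact_mod_cast n.factorial_ne_zero
  have : fallFact x n = (n.factorial : ℚ) * ∑ k ∈ Finset.range (n + 1),
      D k / (k.factorial : ℚ) * (C (n - k) / ((n - k).factorial : ℚ)) := by
    rw [← hco]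
    field_simp
  rw [this, Finset.mul_sum]
  rw [← Finset.sum_range_reflect]
  refine Finset.sum_congr rfl fun l hl => ?_
  have hln : l ≤ n := Nat.lt_succ_iff.mp (Finset.mem_range.mp hl)
  have hsub : n + 1 - 1 - l = n - l := by omega
  rw [hsub]
  have hsub2 : n - (n - l) = l := by omega
  rw [hsub2]
  have hchooseN := Nat.choose_mul_factorial_mul_factorial (Nat.sub_le n l)
  rw [hsub2] at hchooseN
  have hchoose : ((n.choose (n - l) : ℕ) : ℚ) * ((n - l).factorial : ℚ) * ((l.factorial : ℚ))
      = (n.factorial : ℚ) := by exact_mod_cast hchooseN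
  have h1 : ((n - l).factorial : ℚ) ≠ 0 := by exact_mod_cast (n - l).factorial_ne_zero
  have h2 : ((l.factorial : ℚ)) ≠ 0 := by exact_mod_cast l.factorial_ne_zero
  have hch : n.choose (n - l) = n.choose l := Nat.choose_symm hln
  rw [← hch, ← hchoose]
  field_simp
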